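/- Let p be an odd prime, K = Q(ζ_p), p = (1 - ζ_p) the prime above p, and O* the unit group of O_K. For k = 1 and k = 2, the natural map O* → (O_K/p^k)* is surjective. -/

import Mathlib

open NumberField

private lemma stmt4_pow_aux {R : Type*} [CommRing R] (π : R) (j : ℕ) :
    π ^ 2 ∣ (1 - π) ^ j - (1 - (j : R) * π) := by
  induction j with
  | zero => simp
  | succ j ih =>
    have h : (1 - π) ^ (j + 1) - (1 - ((j : R) + 1) * π) =
        (1 - π) * ((1 - π) ^ j - (1 - (j : R) * π)) + (j : R) * π ^ 2 := by ring
    rw [show ((j + 1 : ℕ) : R) = (j : R) + 1 by push_cast; ring, h]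
    exact dvd_add (ih.mul_left _) (dvd_mul_left _ _)

/-- Let `p` be an odd prime, `K = ℚ(ζ_p)`, `𝔭 = (1 - ζ_p)` the prime above `p`.
For `k = 1` and `k = 2`, the natural map `(𝓞 K)ˣ → ((𝓞 K)/𝔭^k)ˣ` is surjective. -/
theorem stmt4 (p : ℕ+) (hp : (p : ℕ).Prime) (hodd : (p : ℕ) ≠ 2)
    (K : Type*) [Field K] [NumberField K] [IsCyclotomicExtension {(p : ℕ)} ℚ K]
    (ζ : 𝓞 K) (hζ : IsPrimitiveRoot ζ p) :
    (Function.Surjective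
      (Units.map (Ideal.Quotient.mk ((Ideal.span {1 - ζ}) ^ 1)).toMonoidHom)) ∧
    (Function.Surjective
      (Units.map (Ideal.Quotient.mk ((Ideal.span {1 - ζ}) ^ 2)).toMonoidHom)) := by
  haveI : Fact (p : ℕ).Prime := ⟨hp⟩
  have hζK : IsPrimitiveRoot (algebraMap (𝓞 K) K ζ) p :=
    hζ.map_of_injective RingOfIntegers.coe_injective
  have hti : hζK.toInteger = ζ := rfl
  have hprime : Prime (ζ - 1) := by
    have := hζK.zeta_sub_one_prime'
    rwa [hti] at this
  have hπ : Prime (1 - ζ) := by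
    rw [show (1 - ζ) = -(ζ - 1) by ring]
    exact hprime.neg
  have hπp : (1 - ζ) ∣ (p : 𝓞 K) := by
    have h := hζK.toInteger_sub_one_dvd_prime'
    rw [hti] at h
    rw [show (1 - ζ) = -(ζ - 1) by ring, neg_dvd]
    exact h
  -- every element of 𝓞 K is congruent to an integer mod (1 - ζ)
  have hres : ∀ x : 𝓞 K, ∃ n : ℤ, (1 - ζ) ∣ x - (n : 𝓞 K) := by
    have htop : Algebra.adjoin ℤ ({ζ} : Set (𝓞 K)) = ⊤ := by
      have h := hζK.integralPowerBasis.adjoin_gen_eq_top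
      rwa [hζK.integralPowerBasis_gen, hti] at h
    intro x
    have hx : x ∈ Algebra.adjoin ℤ ({ζ} : Set (𝓞 K)) := htop ▸ Algebra.mem_top
    refine Algebra.adjoin_induction ?_ ?_ ?_ ?_ hx
    · rintro z hz
      rw [Set.mem_singleton_iff] at hz
      subst hz
      exact ⟨1, by exact ⟨-1, by push_cast; ring⟩⟩
    · intro r
      exact ⟨r, by simp⟩
    · rintro a b _ _ ⟨n, hn⟩ ⟨m, hm⟩
      exact ⟨n + m, by push_cast; convert dvd_add hn hm using 1; ring⟩
    · rintro a b _ _ ⟨n, hn⟩ ⟨m, hm⟩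
      refine ⟨n * m, ?_⟩
      have h := dvd_add (hm.mul_left a) (hn.mul_left (m : 𝓞 K))
      push_cast
      convert h using 1
      ring
  -- integers prime to p lift to units mod (1 - ζ)
  have hunit : ∀ n : ℤ, ¬ (p : ℤ) ∣ n →
      ∃ u : (𝓞 K)ˣ, (1 - ζ) ∣ (u : 𝓞 K) - (n : 𝓞 K) := by
    intro n hn
    have hn0 : (n : ZMod (p : ℕ)) ≠ 0 := by
      simpa [ZMod.intCast_zmod_eq_zero_iff_dvd] using hn
    set m : ℕ := (n : ZMod (p : ℕ)).val with hmdef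
    have hmcast : ((m : ℤ) : ZMod (p : ℕ)) = (n : ZMod (p : ℕ)) := by
      push_cast
      simp [hmdef, ZMod.natCast_val, ZMod.cast_id]
    have hmp : ¬ (p : ℕ) ∣ m := by
      intro h
      apply hn0
      rw [← hmcast]
      exact_mod_cast (ZMod.natCast_eq_zero_iff m p).2 h
    have hco : Nat.Coprime m p := (Nat.Coprime.symm (hp.coprime_iff_not_dvd.2 hmp))
    have hpm : IsPrimitiveRoot (ζ ^ m) p := hζ.pow_of_coprime m hco
    have hpmK : IsPrimitiveRoot (algebraMap (𝓞 K) K (ζ ^ m)) p :=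
      hpm.map_of_injective RingOfIntegers.coe_injective
    have hprime2 : Prime (ζ ^ m - 1) := by
      have := hpmK.zeta_sub_one_prime'
      rwa [show hpmK.toInteger = ζ ^ m from rfl] at this
    have hgeo : (∑ i ∈ Finset.range m, ζ ^ i) * (ζ - 1) = ζ ^ m - 1 := geom_sum_mul ζ m
    have hIsU : IsUnit (∑ i ∈ Finset.range m, ζ ^ i) := by
      rcases hprime2.irreducible.isUnit_or_isUnit hgeo.symm with h | h
      · exact h
      · exact absurd h hprime.not_unit
    refine ⟨hIsU.unit, ?_⟩
    have h1 : (1 - ζ) ∣ (∑ i ∈ Finset.range m, ζ ^ i) - (m : 𝓞 K) := by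
      have heq : (∑ i ∈ Finset.range m, ζ ^ i) - (m : 𝓞 K) =
          ∑ i ∈ Finset.range m, (ζ ^ i - 1) := by
        rw [Finset.sum_sub_distrib]
        simp
      rw [heq, show (1 - ζ) = -(ζ - 1) by ring, neg_dvd]
      refine Finset.dvd_sum fun i _ => ?_
      simpa using sub_dvd_pow_sub_pow ζ 1 i
    have h2 : (1 - ζ) ∣ ((m : 𝓞 K) - (n : 𝓞 K)) := by
      have hd : (p : ℤ) ∣ ((m : ℤ) - n) := by
        rw [← ZMod.intCast_zmod_eq_zero_iff_dvd]
        push_cast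
        simp [sub_eq_zero, hmdef, ZMod.natCast_val, ZMod.cast_id]
      refine hπp.trans ?_
      obtain ⟨c, hc⟩ := hd
      refine ⟨(c : 𝓞 K), ?_⟩
      have h3 : (((m : ℤ) - n : ℤ) : 𝓞 K) = ((((p : ℕ) : ℤ) * c : ℤ) : 𝓞 K) := by rw [hc]
      push_cast at h3 ⊢
      linear_combination h3
    have := dvd_add h1 h2
    rw [IsUnit.unit_spec]
    convert this using 1
    ring
  -- π ∣ p in ℤ-coe form
  have hcastdvd : ∀ n : ℤ, (p : ℤ) ∣ n → (1 - ζ) ∣ (n : 𝓞 K) := by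
    intro n hd
    refine hπp.trans ?_
    obtain ⟨c, hc⟩ := hd
    refine ⟨(c : 𝓞 K), ?_⟩
    have h3 : ((n : ℤ) : 𝓞 K) = ((((p : ℕ) : ℤ) * c : ℤ) : 𝓞 K) := by rw [hc]
    push_cast at h3 ⊢
    linear_combination h3
  have hnotunitquot : ∀ x : 𝓞 K, (1 - ζ) ∣ x →
      ¬ IsUnit (Ideal.Quotient.mk (Ideal.span {1 - ζ}) x) := by
    intro x hdvd hu
    have hzero : (Ideal.Quotient.mk (Ideal.span {1 - ζ}) x) = 0 := by
      rw [Ideal.Quotient.eq_zero_iff_mem]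
      exact Ideal.mem_span_singleton.2 hdvd
    rw [hzero] at hu
    have h10 := isUnit_zero_iff.1 hu
    have h1mem : (1 : 𝓞 K) ∈ Ideal.span {1 - ζ} := by
      rw [← Ideal.Quotient.eq_zero_iff_mem, map_one, ← h10]
    rw [Ideal.mem_span_singleton] at h1mem
    exact hπ.not_unit (isUnit_of_dvd_one h1mem)
  constructor
  · -- k = 1
    intro c
    obtain ⟨x, hx⟩ := Ideal.Quotient.mk_surjective (c : 𝓞 K ⧸ (Ideal.span {1 - ζ}) ^ 1)
    have hxu : IsUnit (Ideal.Quotient.mk ((Ideal.span {1 - ζ}) ^ 1) x) := by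
      rw [hx]; exact c.isUnit
    rw [pow_one] at hxu
    have hxn : ¬ (1 - ζ) ∣ x := fun h => hnotunitquot x h hxu
    obtain ⟨n, hn⟩ := hres x
    have hpn : ¬ (p : ℤ) ∣ n := by
      intro h
      apply hxn
      have := dvd_add hn (hcastdvd n h)
      simpa using this
    obtain ⟨u, hu⟩ := hunit n hpn
    refine ⟨u, ?_⟩
    ext
    simp only [Units.coe_map, RingHom.toMonoidHom_eq_coe, MonoidHom.coe_coe]
    rw [← hx]
    refine Ideal.Quotient.eq.2 ?_
    rw [pow_one, Ideal.mem_span_singleton]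
    have := dvd_sub hu hn
    convert this using 1
    ring
  · -- k = 2
    intro c
    obtain ⟨x, hx⟩ := Ideal.Quotient.mk_surjective (c : 𝓞 K ⧸ (Ideal.span {1 - ζ}) ^ 2)
    have hxu2 : IsUnit (Ideal.Quotient.mk ((Ideal.span {1 - ζ}) ^ 2) x) := by
      rw [hx]; exact c.isUnit
    have hle : (Ideal.span {1 - ζ}) ^ 2 ≤ Ideal.span {1 - ζ} :=
      Ideal.pow_le_self two_ne_zero
    have hxu1 : IsUnit (Ideal.Quotient.mk (Ideal.span {1 - ζ}) x) := by
      have h := hxu2.map (Ideal.Quotient.factor hle)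
      rwa [Ideal.Quotient.factor_mk] at h
    have hxn : ¬ (1 - ζ) ∣ x := fun h => hnotunitquot x h hxu1
    obtain ⟨n, hn⟩ := hres x
    have hpn : ¬ (p : ℤ) ∣ n := by
      intro h
      apply hxn
      have := dvd_add hn (hcastdvd n h)
      simpa using this
    obtain ⟨u, hu⟩ := hunit n hpn
    -- x - u = (1 - ζ) * y
    have hxud : (1 - ζ) ∣ x - (u : 𝓞 K) := by
      have := dvd_sub hn hu
      convert this using 1
      ring
    obtain ⟨y, hy⟩ := hxud
    obtain ⟨mz, hmz⟩ := hres y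
    -- choose j with p ∣ n * j + mz
    have hn0 : (n : ZMod (p : ℕ)) ≠ 0 := by
      simpa [ZMod.intCast_zmod_eq_zero_iff_dvd] using hpn
    set z : ZMod (p : ℕ) := (-mz : ℤ) * (n : ZMod (p : ℕ))⁻¹ with hzdef
    set j : ℕ := z.val with hjdef
    have hj : (p : ℤ) ∣ (n * (j : ℤ) + mz) := by
      rw [← ZMod.intCast_zmod_eq_zero_iff_dvd]
      push_cast
      rw [show ((j : ZMod (p : ℕ))) = z by simp [hjdef, ZMod.natCast_val, ZMod.cast_id]]
      rw [hzdef]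
      push_cast
      field_simp
      ring
    have hζu : IsUnit ζ := hζ.isUnit p.ne_zero
    refine ⟨u * hζu.unit ^ j, ?_⟩
    ext
    simp only [Units.coe_map, RingHom.toMonoidHom_eq_coe, MonoidHom.coe_coe, Units.val_mul,
      Units.val_pow_eq_pow_val, IsUnit.unit_spec]
    rw [← hx]
    refine (Ideal.Quotient.eq.2 ?_).symm
    rw [Ideal.span_singleton_pow, Ideal.mem_span_singleton]
    -- π² ∣ x - u * ζ^j
    have hA : (1 - ζ) ^ 2 ∣ ζ ^ j - (1 - (j : 𝓞 K) * (1 - ζ)) := by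
      have := stmt4_pow_aux (1 - ζ) j
      rwa [show (1 : 𝓞 K) - (1 - ζ) = ζ by ring] at this
    have hB : (1 - ζ) ∣ y + (u : 𝓞 K) * (j : 𝓞 K) := by
      have h1 := hmz
      have h2 := hu.mul_right ((j : 𝓞 K))
      have h3 := hcastdvd _ hj
      have := dvd_add (dvd_add h1 h2) h3
      convert this using 1
      push_cast
      ring
    obtain ⟨t, ht⟩ := hB
    obtain ⟨s, hs⟩ := hA
    have hkey : x - (u : 𝓞 K) * ζ ^ j =
        (1 - ζ) * (y + (u : 𝓞 K) * (j : 𝓞 K)) -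
        (u : 𝓞 K) * (ζ ^ j - (1 - (j : 𝓞 K) * (1 - ζ))) := by
      have hx' : x = (u : 𝓞 K) + (1 - ζ) * y := by linear_combination hy
      rw [hx']
      ring
    rw [hkey, ht, hs]
    exact ⟨t - (u : 𝓞 K) * s, by ring⟩
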